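/- Let φ: (M³, g̃) → (N²,h) be a submersive semi-conformal map with g̃ = (φ*h)/λ² + θ̃², where θ̃ is a 1-form with dθ̃ = Ω̃ basic and θ̃ nonvanishing on ker dφ. Then the fibres of φ are geodesics of g̃; equivalently, φ is a harmonic morphism with respect to g̃. -/

import Mathlib

open scoped BigOperators

noncomputable section

/-- Partial derivative of `f` in the `i`-th coordinate direction. -/
def pd {n : ℕ} (f : (Fin n → ℝ) → ℝ) (i : Fin n) (x : Fin n → ℝ) : ℝ :=
  fderiv ℝ f x (Pi.single i 1)

/-- Pointwise inverse of a metric (the components `g^{ij}`). -/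
def ginv {n : ℕ} (g : (Fin n → ℝ) → Matrix (Fin n) (Fin n) ℝ) (x : Fin n → ℝ) :
    Matrix (Fin n) (Fin n) ℝ := (g x)⁻¹

/-- A smooth Riemannian metric in coordinates. -/
def IsMetric {n : ℕ} (g : (Fin n → ℝ) → Matrix (Fin n) (Fin n) ℝ) : Prop :=
  (∀ i j, ContDiff ℝ (⊤ : ℕ∞) fun x => g x i j) ∧ ∀ x, (g x).IsSymm ∧ (g x).PosDef

/-- A smooth vector field (or componentwise-smooth family). -/
def SmoothVF {n : ℕ} (X : (Fin n → ℝ) → Fin n → ℝ) : Prop :=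
  ∀ k, ContDiff ℝ (⊤ : ℕ∞) fun x => X x k

/-- Christoffel symbols `Γ^k_{ij}` of the metric `g`. -/
def christoffel {n : ℕ} (g : (Fin n → ℝ) → Matrix (Fin n) (Fin n) ℝ)
    (k i j : Fin n) (x : Fin n → ℝ) : ℝ :=
  (1 / 2) * ∑ l, ginv g x k l *
    (pd (fun y => g y l j) i x + pd (fun y => g y l i) j x - pd (fun y => g y i j) l x)

/-- Covariant derivative `(∇_X Y)^k` of the Levi-Civita connection of `g`. -/
def covD {n : ℕ} (g : (Fin n → ℝ) → Matrix (Fin n) (Fin n) ℝ)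
    (X Y : (Fin n → ℝ) → Fin n → ℝ) (x : Fin n → ℝ) (k : Fin n) : ℝ :=
  (∑ i, X x i * pd (fun y => Y y k) i x) + ∑ i, ∑ j, christoffel g k i j x * X x i * Y x j

/-- The Lie bracket of vector fields, `[X,Y]^k = X^i ∂_i Y^k - Y^i ∂_i X^k`. -/
def bracket {n : ℕ} (X Y : (Fin n → ℝ) → Fin n → ℝ) (x : Fin n → ℝ) (k : Fin n) : ℝ :=
  ∑ i, (X x i * pd (fun y => Y y k) i x - Y x i * pd (fun y => X y k) i x)

/-- `φ : (M³,g) → (N²,h)` is semi-conformal with dilation `λ`, in the local-coordinate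
characterization `g^{ij} φ^α_i φ^β_j = λ² h^{αβ}`. -/
def SemiConformal (g : (Fin 3 → ℝ) → Matrix (Fin 3) (Fin 3) ℝ)
    (h : (Fin 2 → ℝ) → Matrix (Fin 2) (Fin 2) ℝ)
    (φ : (Fin 3 → ℝ) → Fin 2 → ℝ) (lam : (Fin 3 → ℝ) → ℝ) : Prop :=
  ∀ x α β, (∑ i, ∑ j, ginv g x i j * pd (fun y => φ y α) i x * pd (fun y => φ y β) j x)
    = lam x ^ 2 * ginv h (φ x) α β

/-- A vector field is vertical when it lies in `ker dφ`. -/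
def Vertical (φ : (Fin 3 → ℝ) → Fin 2 → ℝ) (U : (Fin 3 → ℝ) → Fin 3 → ℝ) : Prop :=
  ∀ x α, (∑ i, pd (fun y => φ y α) i x * U x i) = 0

/-- A vector field of unit length for `g`. -/
def UnitField (g : (Fin 3 → ℝ) → Matrix (Fin 3) (Fin 3) ℝ)
    (U : (Fin 3 → ℝ) → Fin 3 → ℝ) : Prop :=
  ∀ x, (∑ i, ∑ j, g x i j * U x i * U x j) = 1

/-- The dual 1-form `X♭ = g(X,·)`. -/
def flat (g : (Fin 3 → ℝ) → Matrix (Fin 3) (Fin 3) ℝ)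
    (X : (Fin 3 → ℝ) → Fin 3 → ℝ) (j : Fin 3) (x : Fin 3 → ℝ) : ℝ :=
  ∑ k, g x j k * X x k

/-- Horizontal projection (relative to the unit vertical field `U`):
`H X = X - g(X,U) U`. -/
def Hproj (g : (Fin 3 → ℝ) → Matrix (Fin 3) (Fin 3) ℝ)
    (U X : (Fin 3 → ℝ) → Fin 3 → ℝ) (x : Fin 3 → ℝ) (k : Fin 3) : ℝ :=
  X x k - (∑ i, ∑ j, g x i j * X x i * U x j) * U x k

/-- The mean curvature vector `μ = ∇_U U` of the fibres (`U` the unit vertical field). -/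
def meanCurv (g : (Fin 3 → ℝ) → Matrix (Fin 3) (Fin 3) ℝ)
    (U : (Fin 3 → ℝ) → Fin 3 → ℝ) (x : Fin 3 → ℝ) (k : Fin 3) : ℝ :=
  covD g U U x k

/-- Lie derivative of the metric: `(L_E g)_{ij} = E^k ∂_k g_{ij} + g_{kj} ∂_i E^k + g_{ik} ∂_j E^k`. -/
def lieD {n : ℕ} (g : (Fin n → ℝ) → Matrix (Fin n) (Fin n) ℝ)
    (E : (Fin n → ℝ) → Fin n → ℝ) (i j : Fin n) (x : Fin n → ℝ) : ℝ :=
  (∑ k, E x k * pd (fun y => g y i j) k x)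
    + (∑ k, g x k j * pd (fun y => E y k) i x)
    + ∑ k, g x i k * pd (fun y => E y k) j x

/-- The metric `g̃ = φ*h/λ² + θ ⊗ θ`. -/
def pullMetric (h : (Fin 2 → ℝ) → Matrix (Fin 2) (Fin 2) ℝ)
    (φ : (Fin 3 → ℝ) → Fin 2 → ℝ) (lam : (Fin 3 → ℝ) → ℝ)
    (θ : (Fin 3 → ℝ) → Fin 3 → ℝ) (x : Fin 3 → ℝ) : Matrix (Fin 3) (Fin 3) ℝ :=
  Matrix.of fun i j =>
    (1 / lam x ^ 2) *
        (∑ α, ∑ β, h (φ x) α β * pd (fun y => φ y α) i x * pd (fun y => φ y β) j x)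
      + θ x i * θ x j


section AuxLemmas

private lemma diffAt {n : ℕ} {f : (Fin n → ℝ) → ℝ} (hf : ContDiff ℝ (⊤:ℕ∞) f)
    (x : Fin n → ℝ) : DifferentiableAt ℝ f x :=
  (hf.differentiable (by simp)).differentiableAt

private lemma pd_smooth {n : ℕ} {f : (Fin n → ℝ) → ℝ} (hf : ContDiff ℝ (⊤:ℕ∞) f) (i : Fin n) :
    ContDiff ℝ (⊤:ℕ∞) (pd f i) :=
  (hf.fderiv_right (m := (⊤:ℕ∞)) (by exact_mod_cast le_rfl)).clm_apply contDiff_const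

private lemma pd_congr {n : ℕ} {f g : (Fin n → ℝ) → ℝ} (h : ∀ y, f y = g y) (i : Fin n)
    (x : Fin n → ℝ) : pd f i x = pd g i x := by
  have : f = g := funext h
  rw [this]

private lemma pd_const {n : ℕ} (c : ℝ) (i : Fin n) (x : Fin n → ℝ) :
    pd (fun _ => c) i x = 0 := by simp [pd]

private lemma pd_mul {n : ℕ} {f g : (Fin n → ℝ) → ℝ} {x : Fin n → ℝ}
    (hf : DifferentiableAt ℝ f x) (hg : DifferentiableAt ℝ g x) (i : Fin n) :
    pd (fun y => f y * g y) i x = pd f i x * g x + f x * pd g i x := by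
  simp [pd, fderiv_fun_mul hf hg]; ring

private lemma pd_sum {n : ℕ} {ι : Type*} (u : Finset ι) {f : ι → (Fin n → ℝ) → ℝ}
    {x : Fin n → ℝ} (hf : ∀ j ∈ u, DifferentiableAt ℝ (f j) x) (i : Fin n) :
    pd (fun y => ∑ j ∈ u, f j y) i x = ∑ j ∈ u, pd (f j) i x := by
  simp [pd, fderiv_fun_sum hf]

private lemma pd_mul3 {n : ℕ} {f g k : (Fin n → ℝ) → ℝ} {x : Fin n → ℝ}
    (hf : DifferentiableAt ℝ f x) (hg : DifferentiableAt ℝ g x)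
    (hk : DifferentiableAt ℝ k x) (i : Fin n) :
    pd (fun y => f y * g y * k y) i x =
      pd f i x * g x * k x + f x * pd g i x * k x + f x * g x * pd k i x := by
  rw [pd_mul (f := fun y => f y * g y) (hf.mul hg) hk, pd_mul hf hg]; ring

private lemma posdef2_pos {A : Matrix (Fin 2) (Fin 2) ℝ} (hA : A.PosDef) {v : Fin 2 → ℝ}
    (hv : v ≠ 0) : 0 < ∑ α, ∑ β, A α β * v α * v β := by
  have := hA.dotProduct_mulVec_pos hv
  simp only [dotProduct, Matrix.mulVec, Pi.star_apply, star_trivial,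
    Finset.mul_sum] at this
  exact lt_of_lt_of_eq this
    (Finset.sum_congr rfl fun i _ => Finset.sum_congr rfl fun j _ => by ring)

private lemma vec_eq_zero {A : Matrix (Fin 3) (Fin 3) ℝ} (hA : IsUnit A.det) {w : Fin 3 → ℝ}
    (hw : ∀ m, ∑ k, A m k * w k = 0) : ∀ k, w k = 0 := by
  have h0 : A.mulVec w = 0 := funext fun m => by
    simpa [Matrix.mulVec, dotProduct] using hw m
  have := congrArg (A⁻¹.mulVec) h0
  rw [Matrix.mulVec_mulVec, Matrix.nonsing_inv_mul A hA, Matrix.one_mulVec] at this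
  simpa using congrFun this

private lemma contract {A : Matrix (Fin 3) (Fin 3) ℝ} (hA : IsUnit A.det) (C : Fin 3 → ℝ)
    (m : Fin 3) :
    ∑ k, A m k * ((1/2 : ℝ) * ∑ l, A⁻¹ k l * C l) = (1/2) * C m := by
  have h1 : A * A⁻¹ = 1 := Matrix.mul_nonsing_inv A hA
  have hδ : ∀ l, (∑ k, A m k * A⁻¹ k l) = (1 : Matrix (Fin 3) (Fin 3) ℝ) m l := by
    intro l; rw [← Matrix.mul_apply, h1]
  have h0 := hδ 0; have h1' := hδ 1; have h2 := hδ 2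
  fin_cases m <;>
  · simp only [Matrix.one_apply, Fin.sum_univ_three, Fin.mk_zero, Fin.mk_one,
      Fin.ext_iff, Fin.val_zero, Fin.val_one, Fin.val_two,
      show ((⟨2, by omega⟩ : Fin 3)) = 2 from rfl] at h0 h1' h2 ⊢
    norm_num at h0 h1' h2 ⊢
    linear_combination (C 0 / 2) * h0 + (C 1 / 2) * h1' + (C 2 / 2) * h2

private lemma quadExpand (h : (Fin 2 → ℝ) → Matrix (Fin 2) (Fin 2) ℝ)
    (φ : (Fin 3 → ℝ) → Fin 2 → ℝ) (lam : (Fin 3 → ℝ) → ℝ)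
    (θt : (Fin 3 → ℝ) → Fin 3 → ℝ) (x : Fin 3 → ℝ) (v w : Fin 3 → ℝ) :
    (∑ i, ∑ j, pullMetric h φ lam θt x i j * v i * w j)
      = (1 / lam x ^ 2) * (∑ α, ∑ β, h (φ x) α β *
          (∑ i, pd (fun y => φ y α) i x * v i) * (∑ j, pd (fun y => φ y β) j x * w j))
        + (∑ i, θt x i * v i) * (∑ j, θt x j * w j) := by
  simp only [pullMetric, Matrix.of_apply, Fin.sum_univ_three, Fin.sum_univ_two]
  ring

private lemma flatExpand (h : (Fin 2 → ℝ) → Matrix (Fin 2) (Fin 2) ℝ)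
    (φ : (Fin 3 → ℝ) → Fin 2 → ℝ) (lam : (Fin 3 → ℝ) → ℝ)
    (θt : (Fin 3 → ℝ) → Fin 3 → ℝ) (x : Fin 3 → ℝ) (v : Fin 3 → ℝ) (m : Fin 3) :
    (∑ k, pullMetric h φ lam θt x m k * v k)
      = (1 / lam x ^ 2) * (∑ α, ∑ β, h (φ x) α β *
          pd (fun y => φ y α) m x * (∑ k, pd (fun y => φ y β) k x * v k))
        + θt x m * (∑ k, θt x k * v k) := by
  simp only [pullMetric, Matrix.of_apply, Fin.sum_univ_three, Fin.sum_univ_two]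
  ring

end AuxLemmas

/-- If `g̃ = φ*h/λ² + θ̃²` with `λ` basic and `dθ̃` basic
(`dθ̃ = φ*Ω̄`), and `θ̃` nonvanishing on `ker dφ`, then the fibres of `φ` are geodesics of
`g̃`; equivalently `φ : (M³,g̃) → (N²,h)` is a harmonic morphism. -/
theorem fibres_geodesic_of_basic_integrability_form
    (h : (Fin 2 → ℝ) → Matrix (Fin 2) (Fin 2) ℝ)
    (φ : (Fin 3 → ℝ) → Fin 2 → ℝ) (lamN : (Fin 2 → ℝ) → ℝ)
    (θt : (Fin 3 → ℝ) → Fin 3 → ℝ) (ωb : (Fin 2 → ℝ) → ℝ)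
    (hh : IsMetric h)
    (hφ : ∀ α, ContDiff ℝ (⊤ : ℕ∞) fun x => φ x α)
    (hsub : ∀ x, Function.Surjective fun v : Fin 3 → ℝ =>
      (fun α => ∑ i, pd (fun y => φ y α) i x * v i : Fin 2 → ℝ))
    (hlam : ContDiff ℝ (⊤ : ℕ∞) lamN) (hlampos : ∀ y, 0 < lamN y)
    (hθ : SmoothVF θt)
    (hω : ContDiff ℝ (⊤ : ℕ∞) ωb)
    -- `θ̃` is nonvanishing on `ker dφ`
    (hθvert : ∀ (x : Fin 3 → ℝ) (v : Fin 3 → ℝ), v ≠ 0 →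
      (∀ α, (∑ i, pd (fun y => φ y α) i x * v i) = 0) → (∑ j, θt x j * v j) ≠ 0)
    -- `dθ̃ = φ*Ω̄` with `Ω̄ = ω̄ dy¹∧dy²` a 2-form on `N`
    (hbasic : ∀ x i j,
      pd (fun y => θt y j) i x - pd (fun y => θt y i) j x =
        ωb (φ x) * (pd (fun y => φ y 0) i x * pd (fun y => φ y 1) j x
          - pd (fun y => φ y 1) i x * pd (fun y => φ y 0) j x)) :
    ∀ Ut : (Fin 3 → ℝ) → Fin 3 → ℝ, SmoothVF Ut → Vertical φ Ut →
      UnitField (pullMetric h φ (fun x => lamN (φ x)) θt) Ut →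
      ∀ x k, covD (pullMetric h φ (fun x => lamN (φ x)) θt) Ut Ut x k = 0 := by
  intro Ut hUs hUv hUu
  set g : (Fin 3 → ℝ) → Matrix (Fin 3) (Fin 3) ℝ :=
    pullMetric h φ (fun x => lamN (φ x)) θt with hgdef
  -- basic smoothness facts
  have φsm : ContDiff ℝ (⊤:ℕ∞) φ := contDiff_pi.mpr hφ
  have hhsm : ∀ α β, ContDiff ℝ (⊤:ℕ∞) (fun x => h (φ x) α β) :=
    fun α β => (hh.1 α β).comp φsm
  have hlamc : ContDiff ℝ (⊤:ℕ∞) (fun x => lamN (φ x)) := hlam.comp φsm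
  have hcsm : ContDiff ℝ (⊤:ℕ∞) (fun x => 1 / lamN (φ x) ^ 2) :=
    contDiff_const.div (hlamc.pow 2) (fun x => by have := hlampos (φ x); positivity)
  have hgsm : ∀ i j, ContDiff ℝ (⊤:ℕ∞) (fun y => g y i j) := by
    intro i j
    show ContDiff ℝ (⊤:ℕ∞) (fun y => (1 / lamN (φ y) ^ 2) *
      (∑ α, ∑ β, h (φ y) α β * pd (fun z => φ z α) i y * pd (fun z => φ z β) j y)
      + θt y i * θt y j)
    exact (hcsm.mul (ContDiff.sum fun α _ => ContDiff.sum fun β _ =>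
      ((hhsm α β).mul (pd_smooth (hφ α) i)).mul (pd_smooth (hφ β) j))).add
      ((hθ i).mul (hθ j))
  have hssm : ContDiff ℝ (⊤:ℕ∞) (fun y => ∑ j, θt y j * Ut y j) :=
    ContDiff.sum fun j _ => (hθ j).mul (hUs j)
  -- the square of θ(U) is 1
  have hs2 : ∀ y, (∑ j, θt y j * Ut y j) * (∑ j, θt y j * Ut y j) = 1 := by
    intro y
    have hq := quadExpand h φ (fun x => lamN (φ x)) θt y (Ut y) (Ut y)
    simp only [hUv y, mul_zero, zero_mul, Finset.sum_const_zero] at hq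
    rw [hUu y] at hq
    linarith [hq]
  have hsne : ∀ y, (∑ j, θt y j * Ut y j) ≠ 0 := by
    intro y hy
    have := hs2 y
    rw [hy, mul_zero] at this
    norm_num at this
  -- θ(U) has vanishing derivative
  have hpds : ∀ i y, pd (fun z => ∑ j, θt z j * Ut z j) i y = 0 := by
    intro i y
    have h1 : pd (fun z => (∑ j, θt z j * Ut z j) * (∑ j, θt z j * Ut z j)) i y = 0 := by
      rw [pd_congr (fun z => hs2 z) i y, pd_const]
    rw [pd_mul (diffAt hssm y) (diffAt hssm y) i] at h1
    have h2 : (∑ j, θt y j * Ut y j) * pd (fun z => ∑ j, θt z j * Ut z j) i y = 0 := by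
      linarith [h1]
    exact (mul_eq_zero.mp h2).resolve_left (hsne y)
  -- the flat of U
  have hflat : ∀ y m, (∑ k, g y m k * Ut y k) = (∑ j, θt y j * Ut y j) * θt y m := by
    intro y m
    have hq := flatExpand h φ (fun x => lamN (φ x)) θt y (Ut y) m
    simp only [hUv y, mul_zero, zero_mul, Finset.sum_const_zero] at hq
    rw [hq]; ring
  -- symmetry of g
  have hsymm : ∀ y i j, g y i j = g y j i := by
    intro y i j
    have e01 : h (φ y) 1 0 = h (φ y) 0 1 := (hh.2 (φ y)).1.apply 0 1
    show (pullMetric h φ (fun x => lamN (φ x)) θt y i j)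
      = (pullMetric h φ (fun x => lamN (φ x)) θt y j i)
    simp only [pullMetric, Matrix.of_apply, Fin.sum_univ_two]
    linear_combination ((1 / lamN (φ y) ^ 2) *
      (pd (fun z => φ z 1) i y * pd (fun z => φ z 0) j y
        - pd (fun z => φ z 0) i y * pd (fun z => φ z 1) j y)) * e01
  -- positive definiteness of g
  have hpos : ∀ y, (g y).PosDef := by
    intro y
    refine Matrix.PosDef.of_dotProduct_mulVec_pos ?_ ?_
    · show Matrix.conjTranspose (g y) = g y
      ext i j
      simp only [Matrix.conjTranspose_apply, star_trivial]
      exact hsymm y j i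
    · intro v hv
      have hq0 : dotProduct (star v) ((g y).mulVec v)
          = ∑ i, ∑ j, g y i j * v i * v j := by
        simp only [dotProduct, Matrix.mulVec, Pi.star_apply, star_trivial,
          Finset.mul_sum]
        exact Finset.sum_congr rfl fun i _ => Finset.sum_congr rfl fun j _ => by ring
      rw [hq0, hgdef, quadExpand h φ (fun x => lamN (φ x)) θt y v v]
      by_cases hw : ∀ α, (∑ i, pd (fun z => φ z α) i y * v i) = 0
      · simp only [hw, mul_zero, zero_mul, Finset.sum_const_zero, zero_add]
        have hne := hθvert y v hv hw
        exact mul_self_pos.mpr hne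
      · have hwne : (fun α => ∑ i, pd (fun z => φ z α) i y * v i) ≠ 0 := by
          intro h0
          push_neg at hw
          obtain ⟨α, hα⟩ := hw
          exact hα (congrFun h0 α)
        have hQ := posdef2_pos (hh.2 (φ y)).2 hwne
        have hc : 0 < 1 / lamN (φ y) ^ 2 := by
          have := hlampos (φ y); positivity
        nlinarith [mul_pos hc hQ, mul_self_nonneg (∑ j, θt y j * v j)]
  have hdet : ∀ y, IsUnit (g y).det := fun y =>
    isUnit_iff_ne_zero.mpr (hpos y).det_pos.ne'
  intro x k
  refine vec_eq_zero (hdet x) (w := fun k => covD g Ut Ut x k) (fun m => ?_) k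
  -- the contracted geodesic equation
  show (∑ kk, g x m kk * covD g Ut Ut x kk) = 0
  -- Christoffel contraction
  have hGam : ∀ i j, (∑ kk, g x m kk * christoffel g kk i j x)
      = (1/2 : ℝ) * (pd (fun y => g y m j) i x + pd (fun y => g y m i) j x
          - pd (fun y => g y i j) m x) := by
    intro i j
    have hc := contract (hdet x)
      (fun l => pd (fun y => g y l j) i x + pd (fun y => g y l i) j x
        - pd (fun y => g y i j) l x) m
    simpa only [christoffel, ginv] using hc
  -- derivative of the flat of U
  have hE : ∀ i, (∑ kk, pd (fun y => g y m kk) i x * Ut x kk)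
      + (∑ kk, g x m kk * pd (fun y => Ut y kk) i x)
      = (∑ j, θt x j * Ut x j) * pd (fun y => θt y m) i x := by
    intro i
    have h1 : pd (fun y => ∑ kk, g y m kk * Ut y kk) i x
        = pd (fun y => (∑ j, θt y j * Ut y j) * θt y m) i x :=
      pd_congr (fun y => hflat y m) i x
    rw [pd_sum Finset.univ (f := fun kk y => g y m kk * Ut y kk)
      (fun kk _ => (diffAt (hgsm m kk) x).mul (diffAt (hUs kk) x)) i] at h1
    rw [pd_mul (diffAt hssm x) (diffAt (hθ m) x) i, hpds i x, zero_mul, zero_add] at h1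
    have h2 : ∀ kk : Fin 3, pd (fun y => g y m kk * Ut y kk) i x
        = pd (fun y => g y m kk) i x * Ut x kk + g x m kk * pd (fun y => Ut y kk) i x :=
      fun kk => pd_mul (diffAt (hgsm m kk) x) (diffAt (hUs kk) x) i
    simp only [h2, Finset.sum_add_distrib] at h1
    exact h1
  -- derivative of the unit-norm identity
  have hF : (∑ i, ∑ j, Ut x i * Ut x j * pd (fun y => g y i j) m x)
      = -2 * ((∑ j, θt x j * Ut x j) *
          (∑ j, θt x j * pd (fun y => Ut y j) m x)) := by
    have h0 : pd (fun y => ∑ i, ∑ j, g y i j * Ut y i * Ut y j) m x = 0 := by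
      rw [pd_congr (fun y => hUu y) m x, pd_const]
    rw [pd_sum Finset.univ (f := fun i y => ∑ j, g y i j * Ut y i * Ut y j)
      (fun i _ => DifferentiableAt.fun_sum (fun j _ =>
      ((diffAt (hgsm i j) x).mul (diffAt (hUs i) x)).mul (diffAt (hUs j) x))) m] at h0
    have h2 : ∀ i : Fin 3, pd (fun y => ∑ j, g y i j * Ut y i * Ut y j) m x
        = ∑ j, pd (fun y => g y i j * Ut y i * Ut y j) m x := fun i =>
      pd_sum Finset.univ (f := fun j y => g y i j * Ut y i * Ut y j) (fun j _ =>
        ((diffAt (hgsm i j) x).mul (diffAt (hUs i) x)).mul (diffAt (hUs j) x)) m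
    simp only [h2] at h0
    have h3 : ∀ i j : Fin 3, pd (fun y => g y i j * Ut y i * Ut y j) m x
        = pd (fun y => g y i j) m x * Ut x i * Ut x j
          + g x i j * pd (fun y => Ut y i) m x * Ut x j
          + g x i j * Ut x i * pd (fun y => Ut y j) m x := fun i j =>
      pd_mul3 (diffAt (hgsm i j) x) (diffAt (hUs i) x) (diffAt (hUs j) x) m
    simp only [h3] at h0
    have hf0 := hflat x 0; have hf1 := hflat x 1; have hf2 := hflat x 2
    have hs01 := hsymm x 0 1; have hs02 := hsymm x 0 2; have hs12 := hsymm x 1 2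
    simp only [Fin.sum_univ_three, Finset.sum_add_distrib] at h0 hf0 hf1 hf2 ⊢
    linear_combination h0 - (2 * pd (fun y => Ut y 0) m x) * hf0
      - (2 * pd (fun y => Ut y 1) m x) * hf1 - (2 * pd (fun y => Ut y 2) m x) * hf2
      - (pd (fun y => Ut y 1) m x * Ut x 0 - pd (fun y => Ut y 0) m x * Ut x 1) * hs01
      - (pd (fun y => Ut y 2) m x * Ut x 0 - pd (fun y => Ut y 0) m x * Ut x 2) * hs02
      - (pd (fun y => Ut y 2) m x * Ut x 1 - pd (fun y => Ut y 1) m x * Ut x 2) * hs12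
  -- the basic-form identity
  have hB : (∑ i, Ut x i * pd (fun y => θt y m) i x)
      = ∑ i, Ut x i * pd (fun y => θt y i) m x := by
    have hb0 := hbasic x 0 m; have hb1 := hbasic x 1 m; have hb2 := hbasic x 2 m
    have hv0 := hUv x 0; have hv1 := hUv x 1
    simp only [Fin.sum_univ_three] at hv0 hv1 ⊢
    linear_combination (Ut x 0) * hb0 + (Ut x 1) * hb1 + (Ut x 2) * hb2
      + (ωb (φ x) * pd (fun y => φ y 1) m x) * hv0
      - (ωb (φ x) * pd (fun y => φ y 0) m x) * hv1
  -- derivative of θ(U), expanded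
  have hSd : (∑ j, pd (fun y => θt y j) m x * Ut x j)
      + (∑ j, θt x j * pd (fun y => Ut y j) m x) = 0 := by
    have h0 := hpds m x
    rw [pd_sum Finset.univ (f := fun j y => θt y j * Ut y j) (fun j _ => (diffAt (hθ j) x).mul (diffAt (hUs j) x)) m] at h0
    have h2 : ∀ j : Fin 3, pd (fun y => θt y j * Ut y j) m x
        = pd (fun y => θt y j) m x * Ut x j + θt x j * pd (fun y => Ut y j) m x :=
      fun j => pd_mul (diffAt (hθ j) x) (diffAt (hUs j) x) m
    simp only [h2, Finset.sum_add_distrib] at h0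
    exact h0
  -- put everything together
  simp only [covD]
  have hE0 := hE 0; have hE1 := hE 1; have hE2 := hE 2
  have hG00 := hGam 0 0; have hG01 := hGam 0 1; have hG02 := hGam 0 2
  have hG10 := hGam 1 0; have hG11 := hGam 1 1; have hG12 := hGam 1 2
  have hG20 := hGam 2 0; have hG21 := hGam 2 1; have hG22 := hGam 2 2
  simp only [Fin.sum_univ_three] at hE0 hE1 hE2 hF hB hSd ⊢
  simp only [Fin.sum_univ_three] at hG00 hG01 hG02 hG10 hG11 hG12 hG20 hG21 hG22
  linear_combination (Ut x 0) * hE0 + (Ut x 1) * hE1 + (Ut x 2) * hE2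
    + (Ut x 0 * Ut x 0) * hG00 + (Ut x 0 * Ut x 1) * hG01 + (Ut x 0 * Ut x 2) * hG02
    + (Ut x 1 * Ut x 0) * hG10 + (Ut x 1 * Ut x 1) * hG11 + (Ut x 1 * Ut x 2) * hG12
    + (Ut x 2 * Ut x 0) * hG20 + (Ut x 2 * Ut x 1) * hG21 + (Ut x 2 * Ut x 2) * hG22
    - (1/2 : ℝ) * hF
    + (θt x 0 * Ut x 0 + θt x 1 * Ut x 1 + θt x 2 * Ut x 2) * hB
    + (θt x 0 * Ut x 0 + θt x 1 * Ut x 1 + θt x 2 * Ut x 2) * hSd
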